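/- Let (θ_p, φ_p, χ_p) ∈ [0,π]×[0,2π)×[0,2π), p = 1,…,m, be sampling points whose elevations are cosine-symmetric, i.e., there is a permutation σ of {1,…,m} with cos θ_{σ(p)} = −cos θ_p for all p. Let k be an integer and let l_1, l_2 ≥ |k| be integers such that l_1 + l_2 is odd. Then Σ_{p=1}^m conj(D_{l_1}^{k,0}(θ_p, φ_p, χ_p)) · D_{l_2}^{k,0}(θ_p, φ_p, χ_p) = 0; that is, the two corresponding columns of the Wigner-D sensing matrix are orthogonal. -/

import Mathlib

open scoped Real BigOperators

/-- Associated Legendre polynomial `P_l^k(x)` for integer order `k` (possibly negative). -/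
noncomputable def assocLegendre (l : ℕ) (k : ℤ) (x : ℝ) : ℝ :=
  ((-1 : ℝ) ^ k / (2 ^ l * (Nat.factorial l : ℝ))) * (1 - x ^ 2) ^ ((k : ℝ) / 2) *
    iteratedDeriv (k + (l : ℤ)).toNat (fun y : ℝ => (y ^ 2 - 1) ^ l) x

/-- Normalization factor of spherical harmonics. -/
noncomputable def shNormFactor (l : ℕ) (k : ℤ) : ℝ :=
  Real.sqrt ((2 * (l : ℝ) + 1) / (4 * Real.pi) *
    ((Nat.factorial ((l : ℤ) - k).toNat : ℝ) / (Nat.factorial ((l : ℤ) + k).toNat : ℝ)))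

/-- Spherical harmonic `Y_l^k(θ,φ)`. -/
noncomputable def sphericalHarmonic (l : ℕ) (k : ℤ) (θ φ : ℝ) : ℂ :=
  ((shNormFactor l k * assocLegendre l k (Real.cos θ) : ℝ) : ℂ) *
    Complex.exp (Complex.I * (k : ℂ) * (φ : ℂ))

/-- Jacobi polynomial `P_α^{(ξ,λ)}(x)`. -/
noncomputable def jacobiP (a ξ lam : ℕ) (x : ℝ) : ℝ :=
  ((-1 : ℝ) ^ a / (2 ^ a * (Nat.factorial a : ℝ))) * (1 - x) ^ (-(ξ : ℤ)) *
    (1 + x) ^ (-(lam : ℤ)) *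
    iteratedDeriv a (fun y : ℝ => (1 - y) ^ ξ * (1 + y) ^ lam * (1 - y ^ 2) ^ a) x

/-- The coefficient `γ = α!(α+ξ+λ)!/((α+ξ)!(α+λ)!)`. -/
noncomputable def jacobiGamma (a ξ lam : ℕ) : ℝ :=
  ((Nat.factorial a : ℝ) * (Nat.factorial (a + ξ + lam) : ℝ)) /
    ((Nat.factorial (a + ξ) : ℝ) * (Nat.factorial (a + lam) : ℝ))

/-- Wigner d-function `d_l^{k,n}(cos θ)` (as a function of `θ`). -/
noncomputable def wignerd (l : ℕ) (k n : ℤ) (θ : ℝ) : ℝ :=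
  let ξ : ℕ := (k - n).natAbs
  let lam : ℕ := (k + n).natAbs
  let a : ℕ := l - (ξ + lam) / 2
  let ω : ℝ := if k ≤ n then 1 else (-1 : ℝ) ^ (n - k)
  ω * Real.sqrt (jacobiGamma a ξ lam) * (Real.sin (θ / 2)) ^ ξ * (Real.cos (θ / 2)) ^ lam *
    jacobiP a ξ lam (Real.cos θ)

/-- Wigner D-function `D_l^{k,n}(θ,φ,χ)`. -/
noncomputable def wignerD (l : ℕ) (k n : ℤ) (θ φ χ : ℝ) : ℂ :=
  ((Real.sqrt ((2 * (l : ℝ) + 1) / (8 * Real.pi ^ 2)) : ℝ) : ℂ) *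
    Complex.exp (-(Complex.I * (k : ℂ) * (φ : ℂ))) * ((wignerd l k n θ : ℝ) : ℂ) *
    Complex.exp (-(Complex.I * (n : ℂ) * (χ : ℂ)))

/-- Column index set for the spherical-harmonic sensing matrix: pairs `(l,k)`,
`0 ≤ l ≤ B-1`, `-l ≤ k ≤ l`.  It has `B^2` elements. -/
abbrev SHIndex (B : ℕ) := Σ l : Fin B, ↥(Set.Icc (-(l.1 : ℤ)) (l.1 : ℤ))

/-- Column index set for the Wigner-D sensing matrix: triples `(l,k,n)`,
`0 ≤ l ≤ B-1`, `-l ≤ k,n ≤ l`.  It has `B(2B-1)(2B+1)/3` elements. -/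
abbrev WDIndex (B : ℕ) :=
  Σ l : Fin B, ↥(Set.Icc (-(l.1 : ℤ)) (l.1 : ℤ)) × ↥(Set.Icc (-(l.1 : ℤ)) (l.1 : ℤ))

/-- The spherical-harmonic sensing matrix. -/
noncomputable def shMatrix {m : ℕ} (B : ℕ) (θ φ : Fin m → ℝ) :
    Matrix (Fin m) (SHIndex B) ℂ :=
  fun p i => sphericalHarmonic i.1.1 i.2.1 (θ p) (φ p)

/-- The Wigner-D sensing matrix. -/
noncomputable def wdMatrix {m : ℕ} (B : ℕ) (θ φ χ : Fin m → ℝ) :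
    Matrix (Fin m) (WDIndex B) ℂ :=
  fun p i => wignerD i.1.1 i.2.1.1 i.2.2.1 (θ p) (φ p) (χ p)

/-- Mutual coherence of a matrix: the supremum over pairs of distinct columns of the
normalized absolute inner product. -/
noncomputable def mutualCoherence {m : ℕ} {ι : Type*} (A : Matrix (Fin m) ι ℂ) : ℝ :=
  sSup {x : ℝ | ∃ i j : ι, i ≠ j ∧
    x = ‖∑ p, (starRingEnd ℂ) (A p i) * A p j‖ /
        (Real.sqrt (∑ p, Complex.normSq (A p i)) * Real.sqrt (∑ p, Complex.normSq (A p j)))}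



lemma jacobiP_neg_arg (a ξ : ℕ) (x : ℝ) :
    jacobiP a ξ ξ (-x) = (-1 : ℝ) ^ a * jacobiP a ξ ξ x := by
  unfold jacobiP
  set g : ℝ → ℝ := fun y : ℝ => (1 - y) ^ ξ * (1 + y) ^ ξ * (1 - y ^ 2) ^ a with hgdef
  have hg : (fun y : ℝ => g (-y)) = g := by
    funext y
    show (1 - -y) ^ ξ * (1 + -y) ^ ξ * (1 - (-y) ^ 2) ^ a = _
    rw [sub_neg_eq_add, ← sub_eq_add_neg, neg_sq]
    simp only [g]
    ring
  have hsq : (-1 : ℝ) ^ a * (-1 : ℝ) ^ a = 1 := by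
    rw [← pow_add]
    exact Even.neg_one_pow ⟨a, rfl⟩
  have hd : iteratedDeriv a g (-x) = (-1 : ℝ) ^ a * iteratedDeriv a g x := by
    have h := iteratedDeriv_comp_neg a g x
    rw [hg, smul_eq_mul] at h
    rw [h, ← mul_assoc, hsq, one_mul]
  rw [hd, sub_neg_eq_add, ← sub_eq_add_neg]
  ring

lemma wignerd_pi_sub (l : ℕ) (k : ℤ) (θ : ℝ) :
    wignerd l k 0 (Real.pi - θ) = (-1 : ℝ) ^ (l - k.natAbs) * wignerd l k 0 θ := by
  unfold wignerd
  have ha : (k.natAbs + k.natAbs) / 2 = k.natAbs := by omega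
  simp only [sub_zero, add_zero, ha]
  have h1 : (Real.pi - θ) / 2 = Real.pi / 2 - θ / 2 := by ring
  rw [h1, Real.sin_pi_div_two_sub, Real.cos_pi_div_two_sub, Real.cos_pi_sub,
    jacobiP_neg_arg]
  ring

lemma conj_exp_mul (c : ℤ) (t : ℝ) :
    (starRingEnd ℂ) (Complex.exp (-(Complex.I * (c : ℂ) * (t : ℂ)))) *
      Complex.exp (-(Complex.I * (c : ℂ) * (t : ℂ))) = 1 := by
  rw [← Complex.exp_conj, ← Complex.exp_add]
  simp only [map_neg, map_mul, Complex.conj_I, Complex.conj_ofReal, map_intCast]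
  rw [show -(-Complex.I * (c : ℂ) * (t : ℂ)) + -(Complex.I * (c : ℂ) * (t : ℂ)) = 0 by ring,
    Complex.exp_zero]

lemma wignerD_conj_mul (l₁ l₂ : ℕ) (k : ℤ) (θ φ χ : ℝ) :
    (starRingEnd ℂ) (wignerD l₁ k 0 θ φ χ) * wignerD l₂ k 0 θ φ χ =
    ((Real.sqrt ((2 * (l₁ : ℝ) + 1) / (8 * Real.pi ^ 2)) *
      Real.sqrt ((2 * (l₂ : ℝ) + 1) / (8 * Real.pi ^ 2)) *
      (wignerd l₁ k 0 θ * wignerd l₂ k 0 θ) : ℝ) : ℂ) := by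
  unfold wignerD
  have h0 : Complex.exp (-(Complex.I * ((0 : ℤ) : ℂ) * (χ : ℂ))) = 1 := by
    simp
  rw [h0]
  simp only [map_mul, Complex.conj_ofReal, map_one, mul_one]
  have he := conj_exp_mul k φ
  push_cast
  linear_combination ((Real.sqrt ((2 * (l₁ : ℝ) + 1) / (8 * Real.pi ^ 2)) : ℂ) *
    (Real.sqrt ((2 * (l₂ : ℝ) + 1) / (8 * Real.pi ^ 2)) : ℂ) *
    (wignerd l₁ k 0 θ : ℂ) * (wignerd l₂ k 0 θ : ℂ)) * he

/-- for cosine-symmetric elevation samples, two Wigner-D columns with orders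
`(k,0)` and degrees `l₁, l₂` with `l₁ + l₂` odd are orthogonal. -/
theorem wignerD_columns_orthogonal (m : ℕ) (θ φ χ : Fin m → ℝ)
    (hθ : ∀ p, θ p ∈ Set.Icc 0 Real.pi) (hφ : ∀ p, φ p ∈ Set.Ico 0 (2 * Real.pi))
    (hχ : ∀ p, χ p ∈ Set.Ico 0 (2 * Real.pi))
    (σ : Equiv.Perm (Fin m)) (hσ : ∀ p, Real.cos (θ (σ p)) = -Real.cos (θ p))
    (k : ℤ) (l₁ l₂ : ℕ) (hl₁ : k.natAbs ≤ l₁) (hl₂ : k.natAbs ≤ l₂) (hodd : Odd (l₁ + l₂)) :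
    ∑ p, (starRingEnd ℂ) (wignerD l₁ k 0 (θ p) (φ p) (χ p)) *
      wignerD l₂ k 0 (θ p) (φ p) (χ p) = 0 := by
  have hθ' : ∀ p, θ (σ p) = Real.pi - θ p := by
    intro p
    have h1 := hθ p
    have h2 := hθ (σ p)
    refine Real.injOn_cos h2 ⟨by linarith [h1.2], by linarith [h1.1]⟩ ?_
    rw [hσ p, Real.cos_pi_sub]
  set f : Fin m → ℂ := fun p => (starRingEnd ℂ) (wignerD l₁ k 0 (θ p) (φ p) (χ p)) *
      wignerD l₂ k 0 (θ p) (φ p) (χ p) with hf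
  have hsign : (-1 : ℝ) ^ (l₁ - k.natAbs) * (-1 : ℝ) ^ (l₂ - k.natAbs) = -1 := by
    rw [← pow_add]
    refine Odd.neg_one_pow ?_
    rw [Nat.odd_iff] at hodd ⊢
    omega
  have hneg : ∀ p, f (σ p) = -f p := by
    intro p
    simp only [hf, wignerD_conj_mul, hθ' p, wignerd_pi_sub]
    rw [← Complex.ofReal_neg, Complex.ofReal_inj]
    linear_combination (Real.sqrt ((2 * (l₁ : ℝ) + 1) / (8 * Real.pi ^ 2)) *
      Real.sqrt ((2 * (l₂ : ℝ) + 1) / (8 * Real.pi ^ 2)) *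
      (wignerd l₁ k 0 (θ p) * wignerd l₂ k 0 (θ p))) * hsign
  have h1 : ∑ p, f p = ∑ p, f (σ p) := (Equiv.sum_comp σ f).symm
  have h2 : ∑ p, f (σ p) = -∑ p, f p := by
    simp only [hneg, Finset.sum_neg_distrib]
  rw [h2] at h1
  linear_combination h1 / 2
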